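/- Upper bound on the upper-value SDP (Proposition 3, upper half): assume P* is a symmetric n×n matrix with 𝓡(P*) = 0, and set K* = −R⁻¹BᵀP*, Q* = Q + (K*)ᵀRK*. Fix x_0 ∈ ℝⁿ. Then every symmetric positive semidefinite (n+p)×(n+p) matrix Z, partitioned into blocks Z₁₁ (n×n), Z₁₂ (n×p), Z₂₂ (p×p), that satisfies x_0x_0ᵀ + (A+BK*)Z₁₁ + B_wZ₁₂ᵀ + Z₁₁(A+BK*)ᵀ + Z₁₂B_wᵀ = 0 obeys Tr(Q* Z₁₁) − γ² Tr(Z₂₂) ≤ x_0ᵀP*x_0. -/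

import Mathlib

open Matrix

lemma my_trace_nonneg {ι : Type*} [Fintype ι] [DecidableEq ι]
    {M : Matrix ι ι ℝ} (hM : M.PosSemidef) : 0 ≤ M.trace := by
  have h : ∀ i, 0 ≤ M i i := by
    intro i
    exact hM.diag_nonneg
  exact Finset.sum_nonneg fun i _ => h i

lemma my_trace_fromBlocks {k l : Type*} [Fintype k] [Fintype l]
    (A : Matrix k k ℝ) (B : Matrix k l ℝ) (C : Matrix l k ℝ) (D : Matrix l l ℝ) :
    (fromBlocks A B C D).trace = A.trace + D.trace := by
  simp [Matrix.trace, Fintype.sum_sum_type, fromBlocks]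

lemma my_conjT (k l : Type*) [Fintype k] [Fintype l] (M : Matrix k l ℝ) : Mᴴ = Mᵀ := by
  ext i j; simp [conjTranspose_apply]

lemma my_trace_vecMulVec {k : ℕ} (P : Matrix (Fin k) (Fin k) ℝ) (x : Fin k → ℝ) :
    (P * vecMulVec x x).trace = x ⬝ᵥ P *ᵥ x := by
  simp [Matrix.trace, Matrix.mul_apply, vecMulVec_apply, dotProduct, mulVec, Finset.mul_sum]
  exact Finset.sum_congr rfl fun i _ => Finset.sum_congr rfl fun j _ => by ring

theorem upper_value_sdp_bound {n m p : ℕ}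
    (A : Matrix (Fin n) (Fin n) ℝ) (B : Matrix (Fin n) (Fin m) ℝ)
    (Bw : Matrix (Fin n) (Fin p) ℝ)
    (Q : Matrix (Fin n) (Fin n) ℝ) (hQ : Q.IsSymm)
    (R : Matrix (Fin m) (Fin m) ℝ) (hR : R.PosDef) (hRsymm : R.IsSymm)
    (γ : ℝ) (hγ : 0 < γ)
    (Ps : Matrix (Fin n) (Fin n) ℝ) (hPs : Ps.IsSymm)
    (hARE : Aᵀ * Ps + Ps * A + Q - Ps * B * R⁻¹ * Bᵀ * Ps
      + (γ ^ 2)⁻¹ • (Ps * Bw * Bwᵀ * Ps) = 0)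
    (x0 : Fin n → ℝ)
    (Z₁₁ : Matrix (Fin n) (Fin n) ℝ) (Z₁₂ : Matrix (Fin n) (Fin p) ℝ)
    (Z₂₂ : Matrix (Fin p) (Fin p) ℝ)
    (hZ : (fromBlocks Z₁₁ Z₁₂ Z₁₂ᵀ Z₂₂).PosSemidef)
    (hfeas : vecMulVec x0 x0 + (A + B * (-(R⁻¹ * Bᵀ * Ps))) * Z₁₁ + Bw * Z₁₂ᵀ
      + Z₁₁ * (A + B * (-(R⁻¹ * Bᵀ * Ps)))ᵀ + Z₁₂ * Bwᵀ = 0) :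
    ((Q + (-(R⁻¹ * Bᵀ * Ps))ᵀ * R * (-(R⁻¹ * Bᵀ * Ps))) * Z₁₁).trace
      - γ ^ 2 * Z₂₂.trace ≤ x0 ⬝ᵥ Ps *ᵥ x0 := by
  have hRu : IsUnit R.det := hR.det_pos.ne'.isUnit
  have hRiT : R⁻¹ᵀ = R⁻¹ := by rw [transpose_nonsing_inv, hRsymm.eq]
  set K : Matrix (Fin m) (Fin n) ℝ := -(R⁻¹ * Bᵀ * Ps) with hK
  set Acl : Matrix (Fin n) (Fin n) ℝ := A + B * K with hAcl
  -- K transpose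
  have hKT : Kᵀ = -(Ps * B * R⁻¹) := by
    rw [hK, transpose_neg, transpose_mul, transpose_mul, transpose_transpose, hRiT, hPs.eq]
    rw [Matrix.mul_assoc]
  -- KᵀRK = Ps B R⁻¹ Bᵀ Ps
  have hKRK : Kᵀ * R * K = Ps * B * R⁻¹ * Bᵀ * Ps := by
    rw [hKT, hK]
    simp only [Matrix.neg_mul, Matrix.mul_neg, neg_neg]
    calc Ps * B * R⁻¹ * R * (R⁻¹ * Bᵀ * Ps)
        = Ps * B * (R⁻¹ * R) * (R⁻¹ * Bᵀ * Ps) := by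
          simp only [Matrix.mul_assoc]
      _ = Ps * B * R⁻¹ * Bᵀ * Ps := by
          rw [Matrix.nonsing_inv_mul R hRu, Matrix.mul_one]
          simp only [Matrix.mul_assoc]
  -- key Lyapunov identity
  have hkey : Ps * Acl + Aclᵀ * Ps
      = -(Q + Ps * B * R⁻¹ * Bᵀ * Ps) - (γ ^ 2)⁻¹ • (Ps * Bw * Bwᵀ * Ps) := by
    have hPBK : Ps * (B * K) = -(Ps * B * R⁻¹ * Bᵀ * Ps) := by
      rw [hK]
      simp only [Matrix.mul_neg, Matrix.mul_assoc]
    have hKBP : Kᵀ * Bᵀ * Ps = -(Ps * B * R⁻¹ * Bᵀ * Ps) := by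
      rw [hKT]
      simp only [Matrix.neg_mul, Matrix.mul_assoc]
    rw [hAcl, Matrix.mul_add, transpose_add, transpose_mul, Matrix.add_mul, hPBK, hKBP]
    rw [← sub_eq_zero]
    rw [← hARE]
    abel
  -- trace of feasibility identity against Ps
  have h0 : Ps * (vecMulVec x0 x0 + Acl * Z₁₁ + Bw * Z₁₂ᵀ + Z₁₁ * Aclᵀ + Z₁₂ * Bwᵀ) = 0 := by
    rw [hfeas, Matrix.mul_zero]
  have h1 : (Ps * vecMulVec x0 x0).trace + (Ps * (Acl * Z₁₁)).trace
      + (Ps * (Bw * Z₁₂ᵀ)).trace + (Ps * (Z₁₁ * Aclᵀ)).trace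
      + (Ps * (Z₁₂ * Bwᵀ)).trace = 0 := by
    have := congrArg Matrix.trace h0
    simpa [Matrix.mul_add, trace_add] using this
  have htv : (Ps * vecMulVec x0 x0).trace = x0 ⬝ᵥ Ps *ᵥ x0 := my_trace_vecMulVec Ps x0
  -- combine the two Acl terms via the key identity
  have h2 : (Ps * (Acl * Z₁₁)).trace + (Ps * (Z₁₁ * Aclᵀ)).trace
      = -(((Q + Ps * B * R⁻¹ * Bᵀ * Ps) * Z₁₁).trace)
        - (γ ^ 2)⁻¹ * (Ps * Bw * Bwᵀ * Ps * Z₁₁).trace := by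
    have e1 : (Ps * (Acl * Z₁₁)).trace = ((Ps * Acl) * Z₁₁).trace := by
      rw [Matrix.mul_assoc]
    have e2 : (Ps * (Z₁₁ * Aclᵀ)).trace = ((Aclᵀ * Ps) * Z₁₁).trace := by
      rw [← Matrix.mul_assoc, trace_mul_comm, Matrix.mul_assoc]
    rw [e1, e2, ← trace_add, ← Matrix.add_mul, hkey]
    rw [Matrix.sub_mul, Matrix.neg_mul, Matrix.smul_mul, trace_sub, trace_neg, trace_smul,
      smul_eq_mul]
  -- cross terms are equal
  have hcd : (Ps * (Bw * Z₁₂ᵀ)).trace = (Ps * (Z₁₂ * Bwᵀ)).trace := by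
    have : (Ps * (Z₁₂ * Bwᵀ)).trace = ((Ps * (Z₁₂ * Bwᵀ))ᵀ).trace := (trace_transpose _).symm
    rw [this]
    rw [transpose_mul, transpose_mul, transpose_transpose, hPs.eq]
    rw [trace_mul_comm, Matrix.mul_assoc]
  -- PSD inequality
  have hT : 0 ≤ (γ ^ 2)⁻¹ * (Ps * Bw * Bwᵀ * Ps * Z₁₁).trace
      - (Ps * (Bw * Z₁₂ᵀ)).trace - (Ps * (Z₁₂ * Bwᵀ)).trace + γ ^ 2 * Z₂₂.trace := by
    set a1 : Matrix (Fin n) (Fin p) ℝ := γ⁻¹ • (Ps * Bw) with ha1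
    set b1 : Matrix (Fin p) (Fin p) ℝ := (-γ) • (1 : Matrix (Fin p) (Fin p) ℝ) with hb1
    set W : Matrix (Fin n ⊕ Fin p) (Fin p ⊕ Fin p) ℝ
      := fromBlocks a1 (0 : Matrix (Fin n) (Fin p) ℝ) b1 (0 : Matrix (Fin p) (Fin p) ℝ) with hW
    have hpsd := hZ.conjTranspose_mul_mul_same W
    have hT0 : 0 ≤ (Wᴴ * fromBlocks Z₁₁ Z₁₂ Z₁₂ᵀ Z₂₂ * W).trace := my_trace_nonneg hpsd
    rw [my_conjT, hW, fromBlocks_transpose, fromBlocks_multiply, fromBlocks_multiply,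
      my_trace_fromBlocks] at hT0
    simp only [Matrix.zero_mul, Matrix.mul_zero, add_zero, zero_add, Matrix.trace_zero] at hT0
    rw [ha1, hb1] at hT0
    simp only [transpose_smul, transpose_one, Matrix.smul_mul, Matrix.mul_smul, smul_smul,
      Matrix.add_mul, Matrix.one_mul, Matrix.mul_one, trace_add, trace_smul,
      smul_eq_mul] at hT0
    have s1 : γ⁻¹ * γ⁻¹ = (γ ^ 2)⁻¹ := by rw [sq, mul_inv]
    have s2 : -γ * γ⁻¹ = -1 := by field_simp
    have s3 : γ⁻¹ * -γ = -1 := by field_simp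
    have s4 : -γ * -γ = γ ^ 2 := by ring
    have hb' : ((Ps * Bw)ᵀ * Z₁₁ * (Ps * Bw)).trace = (Ps * Bw * Bwᵀ * Ps * Z₁₁).trace := by
      rw [trace_mul_comm, transpose_mul, hPs.eq]
      simp only [Matrix.mul_assoc]
    have hc' : (Z₁₂ᵀ * (Ps * Bw)).trace = (Ps * (Bw * Z₁₂ᵀ)).trace := by
      rw [trace_mul_comm, Matrix.mul_assoc]
    have hd' : ((Ps * Bw)ᵀ * Z₁₂).trace = (Ps * (Z₁₂ * Bwᵀ)).trace := by
      rw [transpose_mul, hPs.eq, trace_mul_cycle, trace_mul_cycle, Matrix.mul_assoc]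
    rw [hb', hc', hd'] at hT0
    have heq : ∀ x y z w : ℝ, γ⁻¹ * (γ⁻¹ * x + -γ * y) + -γ * (γ⁻¹ * z + -γ * w)
        = (γ ^ 2)⁻¹ * x - y - z + γ ^ 2 * w := by
      intro x y z w
      field_simp
      ring
    rw [heq] at hT0
    exact hT0
  -- finish
  rw [hKRK]
  linarith [h1, h2, hcd, hT, htv]
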